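/- arXiv:2012.09909 — 2 statements merged into one kernel-verified Lean document; each statement's English description precedes it below -/
import Mathlib

section
/- Let G : ℝ³ → ℝ be measurable and satisfy |G(v)| ≤ C₀ e^{−c₀|v|²} for all v ∈ ℝ³, for some constants C₀ ≥ 0 and c₀ > 0. Then for each coordinate i = 1, 2, 3, the function v ↦ v_i Q(G,G)(v) is integrable over ℝ³ and ∫_{ℝ³} v_i Q(G,G)(v) dv = 0. -/
open MeasureTheory Real Set
noncomputable section

abbrev E3 := EuclideanSpace ℝ (Fin 3)

/-- Hard-sphere Boltzmann collision operator `Q(F₁,F₂)(v)`, where the angular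
integration is with respect to the 2-dimensional Hausdorff (surface) measure on the
unit sphere `S² ⊂ ℝ³`. -/
def collQ (F₁ F₂ : E3 → ℝ) (v : E3) : ℝ :=
  ∫ u : E3, ∫ ω in Metric.sphere (0 : E3) 1,
    |(inner ℝ (v - u) ω : ℝ)| *
      (F₁ (u - (inner ℝ (u - v) ω : ℝ) • ω) * F₂ (v + (inner ℝ (u - v) ω : ℝ) • ω)
        - F₁ u * F₂ v) ∂(μH[2])

namespace CollAux


/-- radial projection is Lipschitz on the exterior of the unit ball -/
lemma lipschitz_radial :
    LipschitzOnWith 2 (fun x : E3 => ‖x‖⁻¹ • x) {x : E3 | 1 ≤ ‖x‖} := by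
  have key : ∀ x y : E3, 1 ≤ ‖x‖ → 1 ≤ ‖y‖ → ‖x‖ ≤ ‖y‖ →
      dist (‖x‖⁻¹ • x) (‖y‖⁻¹ • y) ≤ 2 * dist x y := by
    intro x y hx hy hxy
    have hx0 : (0:ℝ) < ‖x‖ := lt_of_lt_of_le one_pos hx
    have hy0 : (0:ℝ) < ‖y‖ := lt_of_lt_of_le one_pos hy
    have h1 : ‖x‖⁻¹ • x - ‖y‖⁻¹ • y = ‖x‖⁻¹ • (x - y) + (‖x‖⁻¹ - ‖y‖⁻¹) • y := by
      rw [smul_sub, sub_smul]; abel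
    rw [dist_eq_norm, h1]
    have h2 : ‖(‖x‖⁻¹ - ‖y‖⁻¹) • y‖ = (‖x‖⁻¹ - ‖y‖⁻¹) * ‖y‖ := by
      rw [norm_smul, Real.norm_eq_abs, abs_of_nonneg]
      rw [sub_nonneg]
      exact inv_anti₀ hx0 hxy
    have h3 : (‖x‖⁻¹ - ‖y‖⁻¹) * ‖y‖ = (‖y‖ - ‖x‖) / ‖x‖ := by
      field_simp
    have h4 : ‖y‖ - ‖x‖ ≤ ‖x - y‖ := by
      have := norm_sub_norm_le y x
      rwa [norm_sub_rev] at this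
    calc ‖‖x‖⁻¹ • (x - y) + (‖x‖⁻¹ - ‖y‖⁻¹) • y‖
        ≤ ‖‖x‖⁻¹ • (x - y)‖ + ‖(‖x‖⁻¹ - ‖y‖⁻¹) • y‖ := norm_add_le _ _
      _ = ‖x‖⁻¹ * ‖x - y‖ + (‖y‖ - ‖x‖) / ‖x‖ := by
          rw [h2, h3, norm_smul, Real.norm_eq_abs, abs_of_pos (inv_pos.2 hx0)]
      _ ≤ 1 * ‖x - y‖ + ‖x - y‖ / 1 := by
          have e1 : ‖x‖⁻¹ * ‖x - y‖ ≤ 1 * ‖x - y‖ :=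
            mul_le_mul_of_nonneg_right (inv_le_one_of_one_le₀ hx) (norm_nonneg _)
          have e2 : (‖y‖ - ‖x‖) / ‖x‖ ≤ ‖x - y‖ / 1 :=
            div_le_div₀ (norm_nonneg _) h4 one_pos hx
          linarith
      _ = 2 * dist x y := by rw [dist_eq_norm]; ring
  apply LipschitzOnWith.of_dist_le_mul
  intro x hx y hy
  rcases le_total ‖x‖ ‖y‖ with h | h
  · simpa using key x y hx hy h
  · rw [dist_comm, dist_comm x y]; simpa using key y x hy hx h



/-- affine parametrization of the face `x i = ε` of the cube -/
def ψ (i : Fin 3) (ε : ℝ) (a : Fin 2 → ℝ) : E3 :=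
  EuclideanSpace.single i ε + a 0 • EuclideanSpace.single (i.succAbove 0) (1:ℝ)
    + a 1 • EuclideanSpace.single (i.succAbove 1) (1:ℝ)

lemma ψ_lipschitz (i : Fin 3) (ε : ℝ) : LipschitzWith 2 (ψ i ε) := by
  apply LipschitzWith.of_dist_le_mul
  intro a b
  have : ψ i ε a - ψ i ε b = (a 0 - b 0) • EuclideanSpace.single (i.succAbove 0) (1:ℝ)
      + (a 1 - b 1) • EuclideanSpace.single (i.succAbove 1) (1:ℝ) := by
    simp only [ψ, sub_smul]; abel
  rw [dist_eq_norm, this]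
  calc ‖(a 0 - b 0) • EuclideanSpace.single (i.succAbove 0) (1:ℝ)
      + (a 1 - b 1) • EuclideanSpace.single (i.succAbove 1) (1:ℝ)‖
      ≤ ‖(a 0 - b 0) • EuclideanSpace.single (i.succAbove 0) (1:ℝ)‖
        + ‖(a 1 - b 1) • EuclideanSpace.single (i.succAbove 1) (1:ℝ)‖ := norm_add_le _ _
    _ = |a 0 - b 0| + |a 1 - b 1| := by
        simp [norm_smul, EuclideanSpace.norm_single]
    _ ≤ dist a b + dist a b := by
        have h0 : |a 0 - b 0| ≤ dist a b := by
          rw [← Real.dist_eq]; exact dist_le_pi_dist a b 0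
        have h1 : |a 1 - b 1| ≤ dist a b := by
          rw [← Real.dist_eq]; exact dist_le_pi_dist a b 1
        linarith
    _ = 2 * dist a b := by push_cast; ring

lemma ψ_apply_self (i : Fin 3) (ε : ℝ) (a : Fin 2 → ℝ) : ψ i ε a i = ε := by
  simp [ψ, EuclideanSpace.single_apply, (Fin.succAbove_ne i 0).symm, (Fin.succAbove_ne i 1).symm,
    Fin.succAbove_ne i 0, Fin.succAbove_ne i 1]

lemma ψ_apply_succAbove (i : Fin 3) (ε : ℝ) (a : Fin 2 → ℝ) (k : Fin 2) :
    ψ i ε a (i.succAbove k) = a k := by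
  have hne : i.succAbove k ≠ i := Fin.succAbove_ne i k
  have hinj := Fin.succAbove_right_injective (p := i)
  fin_cases k <;>
    simp [ψ, EuclideanSpace.single_apply, hne, hinj.eq_iff] <;>
    simp_all [Fin.ext_iff]

/-- The 2-dimensional Hausdorff measure of the unit sphere in `ℝ³` is finite. -/
lemma sphere_hausdorff_lt_top : μH[2] (Metric.sphere (0:E3) 1) < ⊤ := by
  classical
  -- the cube faces
  set D : Fin 3 → ℝ → Set E3 := fun i ε => ψ i ε '' (Metric.closedBall 0 1) with hD
  set U : Set E3 := ⋃ i : Fin 3, (D i 1 ∪ D i (-1)) with hU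
  have hUsub : U ⊆ {x : E3 | 1 ≤ ‖x‖} := by
    rintro x hx
    simp only [hU, mem_iUnion, mem_union] at hx
    obtain ⟨i, hx⟩ := hx
    have : |x i| = 1 := by
      rcases hx with hx | hx <;> obtain ⟨a, _, rfl⟩ := hx <;>
        simp [ψ_apply_self]
    calc (1:ℝ) = |x i| := this.symm
      _ ≤ ‖x‖ := by
          have := EuclideanSpace.norm_eq x
          rw [this]
          have : x i ^ 2 ≤ ∑ j, x j ^ 2 :=
            Finset.single_le_sum (fun j _ => sq_nonneg (x j)) (Finset.mem_univ i)
          calc |x i| = Real.sqrt (x i ^ 2) := (Real.sqrt_sq_eq_abs _).symm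
            _ ≤ Real.sqrt (∑ j, x j ^ 2) := Real.sqrt_le_sqrt this
            _ = Real.sqrt (∑ j, ‖x j‖ ^ 2) := by simp [Real.norm_eq_abs, sq_abs]
  -- the sphere is contained in the radial image of the cube boundary
  have hcover : Metric.sphere (0:E3) 1 ⊆ (fun x : E3 => ‖x‖⁻¹ • x) '' U := by
    intro y hy
    have hy1 : ‖y‖ = 1 := by simpa using hy
    obtain ⟨i, -, hi⟩ := Finset.exists_max_image Finset.univ (fun j => |y j|) ⟨0, Finset.mem_univ 0⟩
    have hyi : 0 < |y i| := by
      rcases eq_or_lt_of_le (abs_nonneg (y i)) with h | h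
      · exfalso
        have : y = 0 := by
          ext j
          have := hi j (Finset.mem_univ j)
          have : |y j| ≤ 0 := by rw [← h] at this; exact this
          simpa [abs_nonpos_iff] using this
        rw [this] at hy1; simp at hy1
      · exact h
    set t : ℝ := |y i|⁻¹ with ht
    have ht0 : 0 < t := inv_pos.2 hyi
    set x : E3 := t • y with hx
    set ε : ℝ := t * y i with hε
    have hεabs : |ε| = 1 := by
      rw [hε, abs_mul, abs_of_pos ht0, ht]
      exact inv_mul_cancel₀ hyi.ne'
    set a : Fin 2 → ℝ := fun k => x (i.succAbove k) with ha
    have hxψ : ψ i ε a = x := by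
      ext j
      rcases eq_or_ne j i with rfl | hj
      · rw [ψ_apply_self]
        simp [hx, hε, PiLp.smul_apply, smul_eq_mul]
      · obtain ⟨k, rfl⟩ := Fin.exists_succAbove_eq hj
        rw [ψ_apply_succAbove]
    have haball : a ∈ Metric.closedBall (0 : Fin 2 → ℝ) 1 := by
      rw [Metric.mem_closedBall, dist_zero_right]
      rw [pi_norm_le_iff_of_nonneg zero_le_one]
      intro k
      rw [ha]
      simp only [Real.norm_eq_abs]
      have : |x (i.succAbove k)| = t * |y (i.succAbove k)| := by
        rw [hx]; simp [PiLp.smul_apply, abs_mul, abs_of_pos ht0, smul_eq_mul]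
      rw [this]
      calc t * |y (i.succAbove k)| ≤ t * |y i| :=
            mul_le_mul_of_nonneg_left (hi _ (Finset.mem_univ _)) ht0.le
        _ = 1 := by rw [ht]; field_simp
    have hxU : x ∈ U := by
      simp only [hU, mem_iUnion, mem_union]
      refine ⟨i, ?_⟩
      rcases abs_eq (by norm_num : (0:ℝ) ≤ 1) |>.1 hεabs with h | h
      · left; rw [h] at hxψ; exact ⟨a, haball, hxψ⟩
      · right; rw [h] at hxψ; exact ⟨a, haball, hxψ⟩
    refine ⟨x, hxU, ?_⟩
    have hnx : ‖x‖ = t := by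
      rw [hx, norm_smul, hy1, Real.norm_eq_abs, abs_of_pos ht0, mul_one]
    show ‖x‖⁻¹ • x = y
    rw [hnx, hx, smul_smul, inv_mul_cancel₀ ht0.ne', one_smul]
  -- measure estimates
  have hface : ∀ (i : Fin 3) (ε : ℝ), μH[2] (D i ε) < ⊤ := by
    intro i ε
    have h := (ψ_lipschitz i ε).hausdorffMeasure_image_le (by norm_num : (0:ℝ) ≤ 2)
      (Metric.closedBall 0 1)
    have hpi : (μH[(2:ℝ)] : Measure (Fin 2 → ℝ)) (Metric.closedBall 0 1) < ⊤ := by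
      have h2 : (μH[((Fintype.card (Fin 2) : ℕ) : ℝ)] : Measure (Fin 2 → ℝ)) = volume :=
        hausdorffMeasure_pi_real
      have h3 : ((Fintype.card (Fin 2) : ℕ) : ℝ) = 2 := by simp
      rw [h3] at h2
      rw [h2]
      exact (isCompact_closedBall (0 : Fin 2 → ℝ) 1).measure_lt_top
    refine lt_of_le_of_lt h (ENNReal.mul_lt_top ?_ hpi)
    exact ENNReal.rpow_lt_top_of_nonneg (by norm_num) ENNReal.coe_ne_top
  have hUfin : μH[2] U < ⊤ := by
    refine lt_of_le_of_lt (measure_iUnion_le _) ?_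
    rw [tsum_fintype]
    refine ENNReal.sum_lt_top.2 fun i _ => ?_
    refine lt_of_le_of_lt (measure_union_le _ _) ?_
    exact ENNReal.add_lt_top.2 ⟨hface i 1, hface i (-1)⟩
  have hlip := lipschitz_radial.mono hUsub
  have h1 : μH[2] (Metric.sphere (0:E3) 1) ≤ μH[2] ((fun x : E3 => ‖x‖⁻¹ • x) '' U) :=
    measure_mono hcover
  have h2 := hlip.hausdorffMeasure_image_le (by norm_num : (0:ℝ) ≤ 2)
  refine lt_of_le_of_lt (h1.trans h2) (ENNReal.mul_lt_top ?_ hUfin)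
  exact ENNReal.rpow_lt_top_of_nonneg (by norm_num) ENNReal.coe_ne_top



/-- the collision reflection, as a linear map on `E3 × E3` (pairs `(v, u)`). -/
def Tmap (e : E3) : (E3 × E3) →ₗ[ℝ] (E3 × E3) where
  toFun p := (p.1 + (inner ℝ (p.2 - p.1) e : ℝ) • e, p.2 - (inner ℝ (p.2 - p.1) e : ℝ) • e)
  map_add' p q := by
    have h : (inner ℝ ((p.2 + q.2) - (p.1 + q.1)) e : ℝ)
        = (inner ℝ (p.2 - p.1) e : ℝ) + (inner ℝ (q.2 - q.1) e : ℝ) := by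
      rw [← inner_add_left]; congr 1; abel
    refine Prod.ext ?_ ?_ <;> simp only [Prod.fst_add, Prod.snd_add, h] <;> module
  map_smul' c p := by
    have h : (inner ℝ (c • p.2 - c • p.1) e : ℝ) = c * (inner ℝ (p.2 - p.1) e : ℝ) := by
      rw [← smul_sub, real_inner_smul_left]
    refine Prod.ext ?_ ?_ <;>
      simp only [Prod.smul_fst, Prod.smul_snd, RingHom.id_apply, h] <;> module

lemma Tmap_apply (e : E3) (p : E3 × E3) :
    Tmap e p = (p.1 + (inner ℝ (p.2 - p.1) e : ℝ) • e, p.2 - (inner ℝ (p.2 - p.1) e : ℝ) • e) := rfl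

lemma Tmap_invol {e : E3} (he : ‖e‖ = 1) : (Tmap e).comp (Tmap e) = LinearMap.id := by
  have hee : (inner ℝ e e : ℝ) = 1 := by
    rw [real_inner_self_eq_norm_sq, he]; norm_num
  apply LinearMap.ext
  rintro ⟨v, u⟩
  simp only [LinearMap.comp_apply, Tmap_apply, LinearMap.id_apply]
  have h : (inner ℝ ((u - (inner ℝ (u - v) e : ℝ) • e) - (v + (inner ℝ (u - v) e : ℝ) • e)) e : ℝ)
      = -(inner ℝ (u - v) e : ℝ) := by
    simp only [inner_sub_left, inner_add_left, real_inner_smul_left, hee]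
    ring
  rw [h]
  refine Prod.ext ?_ ?_ <;> simp <;> module

lemma Tmap_det {e : E3} (he : ‖e‖ = 1) : |LinearMap.det (Tmap e)| = 1 := by
  have h : LinearMap.det (Tmap e) * LinearMap.det (Tmap e) = 1 := by
    rw [← LinearMap.det_comp, Tmap_invol he, LinearMap.det_id]
  rcases mul_self_eq_one_iff.1 h with h | h <;> rw [h] <;> norm_num

lemma Tmap_measurePreserving {e : E3} (he : ‖e‖ = 1) :
    MeasurePreserving (Tmap e)
      ((volume : Measure E3).prod volume) ((volume : Measure E3).prod volume) := by
  have hdet : LinearMap.det (Tmap e) ≠ 0 := by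
    intro h0
    have := Tmap_det he
    rw [h0] at this; norm_num at this
  haveI : ((volume : Measure E3).prod volume).IsAddHaarMeasure :=
    Measure.prod.instIsAddHaarMeasure (volume : Measure E3) (volume : Measure E3)
  refine ⟨(Tmap e).continuous_of_finiteDimensional.measurable, ?_⟩
  rw [Measure.map_linearMap_addHaar_eq_smul_addHaar _ hdet, abs_inv, Tmap_det he]
  norm_num



lemma exp_poly_bound {c : ℝ} (hc : 0 < c) {x : ℝ} (hx : 0 ≤ x) :
    (1 + x) * rexp (-c * x) ≤ (1 + 2 / c) * rexp (-(c / 2) * x) := by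
  have h1 : rexp (-c * x) = rexp (-(c / 2) * x) * rexp (-(c / 2) * x) := by
    rw [← Real.exp_add]; ring_nf
  have h2 : x * rexp (-(c / 2) * x) ≤ 2 / c := by
    have ha : (c / 2) * x ≤ rexp ((c / 2) * x) :=
      le_trans (by linarith [Real.add_one_le_exp ((c / 2) * x)]) (le_refl _)
    have hb : x ≤ (2 / c) * rexp ((c / 2) * x) := by
      have h := mul_le_mul_of_nonneg_left ha (by positivity : (0:ℝ) ≤ 2 / c)
      calc x = 2 / c * (c / 2 * x) := by field_simp
        _ ≤ _ := h
    calc x * rexp (-(c / 2) * x) ≤ ((2 / c) * rexp ((c / 2) * x)) * rexp (-(c / 2) * x) :=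
          mul_le_mul_of_nonneg_right hb (Real.exp_pos _).le
      _ = 2 / c := by rw [mul_assoc, ← Real.exp_add]; simp
  have h3 : rexp (-(c / 2) * x) ≤ 1 := by
    rw [← Real.exp_zero]
    apply Real.exp_le_exp.2
    nlinarith
  have hpos : 0 < rexp (-(c / 2) * x) := Real.exp_pos _
  calc (1 + x) * rexp (-c * x) = rexp (-(c/2)*x) * rexp (-(c/2)*x) + (x * rexp (-(c/2)*x)) * rexp (-(c/2)*x) := by
        rw [h1]; ring
    _ ≤ 1 * rexp (-(c/2)*x) + (2 / c) * rexp (-(c/2)*x) := by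
        apply add_le_add
        · exact mul_le_mul_of_nonneg_right h3 hpos.le
        · exact mul_le_mul_of_nonneg_right h2 hpos.le
    _ = (1 + 2 / c) * rexp (-(c / 2) * x) := by ring

lemma integrable_gauss {b : ℝ} (hb : 0 < b) :
    Integrable (fun v : E3 => rexp (-b * ‖v‖ ^ 2)) := by
  have h := (GaussianFourier.integrable_cexp_neg_mul_sq_norm_add (V := E3)
    (b := (b : ℂ)) (by simpa using hb) 0 0).norm
  apply h.congr
  filter_upwards with v
  rw [Complex.norm_exp]
  congr 1
  simp [inner_zero_left, ← Complex.ofReal_pow, ← Complex.ofReal_mul, ← Complex.ofReal_neg]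


/-! ### coordinate bound -/

lemma coord_le_norm (v : E3) (i : Fin 3) : |v i| ≤ ‖v‖ := by
  rw [EuclideanSpace.norm_eq]
  have h : v i ^ 2 ≤ ∑ j, ‖v j‖ ^ 2 := by
    have : v i ^ 2 ≤ ∑ j, v j ^ 2 :=
      Finset.single_le_sum (fun j _ => sq_nonneg (v j)) (Finset.mem_univ i)
    simpa [Real.norm_eq_abs, sq_abs] using this
  calc |v i| = Real.sqrt (v i ^ 2) := (Real.sqrt_sq_eq_abs _).symm
    _ ≤ _ := Real.sqrt_le_sqrt h

/-! ### the core integrand -/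

def core (G : E3 → ℝ) (v u ω : E3) : ℝ :=
  |(inner ℝ (v - u) ω : ℝ)| *
    (G (u - (inner ℝ (u - v) ω : ℝ) • ω) * G (v + (inner ℝ (u - v) ω : ℝ) • ω) - G u * G v)

lemma core_symm (G : E3 → ℝ) (v u ω : E3) : core G u v ω = core G v u ω := by
  unfold core
  have h1 : u - v = -(v - u) := by abel
  rw [h1, inner_neg_left]
  simp only [abs_neg, neg_smul, sub_neg_eq_add, ← sub_eq_add_neg]
  ring

lemma core_measurable {G : E3 → ℝ} (hG : Measurable G) :
    Measurable (fun p : E3 × E3 × E3 => core G p.1 p.2.1 p.2.2) := by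
  have hσ : Continuous fun p : E3 × E3 × E3 => (inner ℝ (p.2.1 - p.1) p.2.2 : ℝ) :=
    continuous_inner.comp ((continuous_snd.fst.sub continuous_fst).prodMk continuous_snd.snd)
  have hσ' : Continuous fun p : E3 × E3 × E3 => (inner ℝ (p.1 - p.2.1) p.2.2 : ℝ) :=
    continuous_inner.comp ((continuous_fst.sub continuous_snd.fst).prodMk continuous_snd.snd)
  have h1 : Measurable fun p : E3 × E3 × E3 => G (p.2.1 - (inner ℝ (p.2.1 - p.1) p.2.2 : ℝ) • p.2.2) :=
    hG.comp (continuous_snd.fst.sub (hσ.smul continuous_snd.snd)).measurable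
  have h2 : Measurable fun p : E3 × E3 × E3 => G (p.1 + (inner ℝ (p.2.1 - p.1) p.2.2 : ℝ) • p.2.2) :=
    hG.comp (continuous_fst.add (hσ.smul continuous_snd.snd)).measurable
  exact (hσ'.abs.measurable).mul
    (((h1.mul h2)).sub ((hG.comp continuous_snd.fst.measurable).mul
      (hG.comp continuous_fst.measurable)))

lemma energy {ω : E3} (hω : ‖ω‖ = 1) (u v : E3) :
    ‖u - (inner ℝ (u - v) ω : ℝ) • ω‖ ^ 2 + ‖v + (inner ℝ (u - v) ω : ℝ) • ω‖ ^ 2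
      = ‖u‖ ^ 2 + ‖v‖ ^ 2 := by
  have hn : ∀ s : ℝ, ‖s • ω‖ ^ 2 = s ^ 2 := by
    intro s; rw [norm_smul, hω, mul_one, Real.norm_eq_abs, sq_abs]
  rw [norm_sub_sq_real, norm_add_sq_real]
  simp only [hn, real_inner_smul_right, inner_sub_left]
  ring

lemma core_reflect {G : E3 → ℝ} {ω : E3} (hω : ‖ω‖ = 1) (v u : E3) :
    core G (v + (inner ℝ (u - v) ω : ℝ) • ω) (u - (inner ℝ (u - v) ω : ℝ) • ω) ω
      = - core G v u ω := by
  have hee : (inner ℝ ω ω : ℝ) = 1 := by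
    rw [real_inner_self_eq_norm_sq, hω]; norm_num
  set s : ℝ := (inner ℝ (u - v) ω : ℝ) with hs
  have hnew : (inner ℝ ((u - s • ω) - (v + s • ω)) ω : ℝ) = -s := by
    simp only [inner_sub_left, inner_add_left, real_inner_smul_left, hee, hs]
    ring
  have hfirst : (inner ℝ ((v + s • ω) - (u - s • ω)) ω : ℝ) = s := by
    simp only [inner_sub_left, inner_add_left, real_inner_smul_left, hee, hs]
    ring
  have hvu : (inner ℝ (v - u) ω : ℝ) = -s := by
    rw [hs, ← inner_neg_left]; congr 1; abel
  show |(inner ℝ ((v + s • ω) - (u - s • ω)) ω : ℝ)| *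
      (G ((u - s • ω) - (inner ℝ ((u - s • ω) - (v + s • ω)) ω : ℝ) • ω) *
        G ((v + s • ω) + (inner ℝ ((u - s • ω) - (v + s • ω)) ω : ℝ) • ω)
        - G (u - s • ω) * G (v + s • ω))
    = - (|(inner ℝ (v - u) ω : ℝ)| *
      (G (u - s • ω) * G (v + s • ω) - G u * G v))
  rw [hnew, hfirst, hvu]
  have harg1 : (u - s • ω) - (-s) • ω = u := by
    rw [neg_smul, sub_neg_eq_add]; abel
  have harg2 : (v + s • ω) + (-s) • ω = v := by
    rw [neg_smul, ← sub_eq_add_neg]; abel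
  rw [harg1, harg2, abs_neg]
  ring

/-! ### normalized vector and the collision measurable equiv -/

open Classical in
def nvec (ω : E3) : E3 := if ω = 0 then EuclideanSpace.single 0 1 else ‖ω‖⁻¹ • ω

open Classical in
lemma nvec_norm (ω : E3) : ‖nvec ω‖ = 1 := by
  unfold nvec
  split_ifs with h
  · simp [EuclideanSpace.norm_single]
  · rw [norm_smul, Real.norm_eq_abs, abs_inv, abs_of_nonneg (norm_nonneg _)]
    field_simp [norm_ne_zero_iff.2 h]

lemma nvec_eq {ω : E3} (hω : ω ∈ Metric.sphere (0 : E3) 1) : nvec ω = ω := by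
  have h1 : ‖ω‖ = 1 := by simpa using hω
  have h0 : ω ≠ 0 := by intro h; rw [h] at h1; simp at h1
  rw [nvec]
  rw [if_neg h0, h1, inv_one, one_smul]

lemma nvec_measurable : Measurable nvec := by
  have h1 : Measurable fun ω : E3 => ‖ω‖⁻¹ • ω := measurable_norm.inv.smul measurable_id
  unfold nvec
  exact Measurable.ite (measurableSet_eq) measurable_const h1

def Ψfun : E3 × E3 × E3 → E3 × E3 × E3 := fun p => (p.1, Tmap (nvec p.1) p.2)

lemma Ψ_invol : Function.Involutive Ψfun := by
  intro p
  show (p.1, Tmap (nvec p.1) (Tmap (nvec p.1) p.2)) = p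
  have h := Tmap_invol (nvec_norm p.1)
  have h2 : Tmap (nvec p.1) (Tmap (nvec p.1) p.2) = p.2 := by
    have := LinearMap.ext_iff.1 h p.2
    simpa [LinearMap.comp_apply] using this
  rw [h2]

lemma Tuncurry_measurable : Measurable fun q : E3 × (E3 × E3) => Tmap q.1 q.2 := by
  have hT : Continuous fun q : E3 × (E3 × E3) =>
      (q.2.1 + (inner ℝ (q.2.2 - q.2.1) q.1 : ℝ) • q.1,
        q.2.2 - (inner ℝ (q.2.2 - q.2.1) q.1 : ℝ) • q.1) := by
    have h1 : Continuous fun q : E3 × (E3 × E3) => (inner ℝ (q.2.2 - q.2.1) q.1 : ℝ) :=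
      continuous_inner.comp ((continuous_snd.snd.sub continuous_snd.fst).prodMk continuous_fst)
    exact ((continuous_snd.fst.add (h1.smul continuous_fst)).prodMk
      (continuous_snd.snd.sub (h1.smul continuous_fst)))
  have heq : (fun q : E3 × (E3 × E3) => Tmap q.1 q.2) = fun q =>
      (q.2.1 + (inner ℝ (q.2.2 - q.2.1) q.1 : ℝ) • q.1,
        q.2.2 - (inner ℝ (q.2.2 - q.2.1) q.1 : ℝ) • q.1) := funext fun q => Tmap_apply q.1 q.2
  rw [heq]; exact hT.measurable

lemma Ψ_measurable : Measurable Ψfun := by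
  have h : Ψfun = fun p : E3 × E3 × E3 => (p.1,
      (p.2.1 + (inner ℝ (p.2.2 - p.2.1) (nvec p.1) : ℝ) • nvec p.1,
        p.2.2 - (inner ℝ (p.2.2 - p.2.1) (nvec p.1) : ℝ) • nvec p.1)) := by
    funext p
    show (p.1, Tmap (nvec p.1) p.2) = _
    rw [Tmap_apply]
  rw [h]
  have hn : Measurable fun p : E3 × E3 × E3 => nvec p.1 := nvec_measurable.comp measurable_fst
  have hσ : Measurable fun p : E3 × E3 × E3 => (inner ℝ (p.2.2 - p.2.1) (nvec p.1) : ℝ) :=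
    continuous_inner.measurable.comp ((measurable_snd.snd.sub measurable_snd.fst).prodMk hn)
  exact measurable_fst.prodMk ((measurable_snd.fst.add (hσ.smul hn)).prodMk
    (measurable_snd.snd.sub (hσ.smul hn)))

def Ψequiv : (E3 × E3 × E3) ≃ᵐ (E3 × E3 × E3) where
  toFun := Ψfun
  invFun := Ψfun
  left_inv := Ψ_invol.leftInverse
  right_inv := Ψ_invol.rightInverse
  measurable_toFun := Ψ_measurable
  measurable_invFun := Ψ_measurable

/-! ### the restricted Hausdorff measure on the sphere -/

def ν₀ : Measure E3 := μH[2].restrict (Metric.sphere (0 : E3) 1)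

instance : IsFiniteMeasure (μH[2].restrict (Metric.sphere (0 : E3) 1)) :=
  ⟨by rw [Measure.restrict_apply_univ]; exact sphere_hausdorff_lt_top⟩

instance : IsFiniteMeasure ν₀ :=
  ⟨by rw [ν₀, Measure.restrict_apply_univ]; exact sphere_hausdorff_lt_top⟩

lemma Ψ_measurePreserving :
    MeasurePreserving Ψfun (ν₀.prod ((volume : Measure E3).prod volume))
      (ν₀.prod ((volume : Measure E3).prod volume)) := by
  have hgm : Measurable (Function.uncurry fun (ω : E3) (q : E3 × E3) => Tmap (nvec ω) q) :=
    measurable_snd.comp Ψ_measurable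
  have hae : ∀ᵐ ω ∂ν₀, Measure.map (fun q => Tmap (nvec ω) q)
      ((volume : Measure E3).prod volume) = (volume : Measure E3).prod volume :=
    Filter.Eventually.of_forall fun ω => (Tmap_measurePreserving (nvec_norm ω)).map_eq
  have hskew := (MeasurePreserving.id ν₀).skew_product
    (g := fun (ω : E3) (q : E3 × E3) => Tmap (nvec ω) q) hgm hae
  have hfun : (fun p : E3 × E3 × E3 => ((id p.1 : E3), Tmap (nvec p.1) p.2)) = Ψfun := rfl
  exact hfun ▸ hskew

/-! ### rearrangement equivs -/

def eA : (E3 × E3 × E3) ≃ᵐ (E3 × E3 × E3) where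
  toFun := fun p => (p.2.1, p.1, p.2.2)
  invFun := fun p => (p.2.1, p.1, p.2.2)
  left_inv := fun p => rfl
  right_inv := fun p => rfl
  measurable_toFun :=
    measurable_snd.fst.prodMk (measurable_fst.prodMk measurable_snd.snd)
  measurable_invFun :=
    measurable_snd.fst.prodMk (measurable_fst.prodMk measurable_snd.snd)

def cE : (E3 × E3 × E3) ≃ᵐ (E3 × E3 × E3) where
  toFun := fun p => (p.2.2, p.1, p.2.1)
  invFun := fun q => (q.2.1, q.2.2, q.1)
  left_inv := fun p => rfl
  right_inv := fun p => rfl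
  measurable_toFun :=
    measurable_snd.snd.prodMk (measurable_fst.prodMk measurable_snd.fst)
  measurable_invFun :=
    measurable_snd.fst.prodMk (measurable_snd.snd.prodMk measurable_fst)

def πm : Measure (E3 × E3 × E3) := (volume : Measure E3).prod ((volume : Measure E3).prod ν₀)

lemma eA_measurePreserving : MeasurePreserving (⇑eA) πm πm := by
  have h1 : MeasurePreserving (⇑(MeasurableEquiv.prodAssoc :
        (E3 × E3) × E3 ≃ᵐ E3 × E3 × E3).symm) πm
      (((volume : Measure E3).prod volume).prod ν₀) :=
    (measurePreserving_prodAssoc volume volume ν₀).symm MeasurableEquiv.prodAssoc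
  have h2 : MeasurePreserving (Prod.map (Prod.swap : E3 × E3 → E3 × E3) (id : E3 → E3))
      (((volume : Measure E3).prod volume).prod ν₀)
      (((volume : Measure E3).prod volume).prod ν₀) :=
    (Measure.measurePreserving_swap).prod (MeasurePreserving.id ν₀)
  have h3 := measurePreserving_prodAssoc (volume : Measure E3) (volume : Measure E3) ν₀
  exact (h3.comp (h2.comp h1) : _)

lemma cE_measurePreserving :
    MeasurePreserving (⇑cE) πm (ν₀.prod ((volume : Measure E3).prod volume)) := by
  have h1 : MeasurePreserving (⇑(MeasurableEquiv.prodAssoc :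
        (E3 × E3) × E3 ≃ᵐ E3 × E3 × E3).symm) πm
      (((volume : Measure E3).prod volume).prod ν₀) :=
    (measurePreserving_prodAssoc volume volume ν₀).symm MeasurableEquiv.prodAssoc
  have h2 : MeasurePreserving (Prod.swap : (E3 × E3) × E3 → E3 × (E3 × E3))
      (((volume : Measure E3).prod volume).prod ν₀)
      (ν₀.prod ((volume : Measure E3).prod volume)) := Measure.measurePreserving_swap
  exact (h2.comp h1 : _)

def eB : (E3 × E3 × E3) ≃ᵐ (E3 × E3 × E3) := cE.trans (Ψequiv.trans cE.symm)

lemma eB_measurePreserving : MeasurePreserving (⇑eB) πm πm := by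
  have h1 := cE_measurePreserving
  have h2 := Ψ_measurePreserving
  have h3 := h1.symm cE
  exact ((h3.comp (h2.comp h1)) : _)

/-! ### scalar bounds -/

lemma scalar_bound {C₀ c₀ : ℝ} (hC₀ : 0 ≤ C₀) (hc₀ : 0 < c₀) {A B : ℝ}
    (hA : 0 ≤ A) (hB : 0 ≤ B) :
    (1 + A) * ((A + B) * (2 * C₀ ^ 2 * rexp (-c₀ * (B ^ 2 + A ^ 2))))
      ≤ (2 * C₀ ^ 2 * (4 * (1 + 2 / c₀) ^ 2))
        * (rexp (-(c₀ / 2) * A ^ 2) * rexp (-(c₀ / 2) * B ^ 2)) := by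
  have hsplit : rexp (-c₀ * (B ^ 2 + A ^ 2)) = rexp (-c₀ * A ^ 2) * rexp (-c₀ * B ^ 2) := by
    rw [← Real.exp_add]; ring_nf
  have h1 : (1 + A) * (A + B) ≤ 4 * ((1 + A ^ 2) * (1 + B ^ 2)) := by
    nlinarith [sq_nonneg (A - 1), sq_nonneg (B - 1), sq_nonneg (A * B - 1), sq_nonneg (A - B),
      mul_nonneg hA hB, sq_nonneg A, sq_nonneg B]
  have h2 := exp_poly_bound hc₀ (sq_nonneg A)
  have h3 := exp_poly_bound hc₀ (sq_nonneg B)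
  have hc2 : (0:ℝ) < 1 + 2 / c₀ := by positivity
  calc (1 + A) * ((A + B) * (2 * C₀ ^ 2 * rexp (-c₀ * (B ^ 2 + A ^ 2))))
      = 2 * C₀ ^ 2 * (((1 + A) * (A + B)) * (rexp (-c₀ * A ^ 2) * rexp (-c₀ * B ^ 2))) := by
        rw [hsplit]; ring
    _ ≤ 2 * C₀ ^ 2 * ((4 * ((1 + A ^ 2) * (1 + B ^ 2))) * (rexp (-c₀ * A ^ 2) * rexp (-c₀ * B ^ 2))) := by
        apply mul_le_mul_of_nonneg_left _ (by positivity)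
        apply mul_le_mul_of_nonneg_right h1 (by positivity)
    _ = 2 * C₀ ^ 2 * 4 * (((1 + A ^ 2) * rexp (-c₀ * A ^ 2)) * ((1 + B ^ 2) * rexp (-c₀ * B ^ 2))) := by
        ring
    _ ≤ 2 * C₀ ^ 2 * 4 * (((1 + 2 / c₀) * rexp (-(c₀ / 2) * A ^ 2))
          * ((1 + 2 / c₀) * rexp (-(c₀ / 2) * B ^ 2))) := by
        apply mul_le_mul_of_nonneg_left _ (by positivity)
        exact mul_le_mul h2 h3 (by positivity) (by positivity)
    _ = (2 * C₀ ^ 2 * (4 * (1 + 2 / c₀) ^ 2))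
        * (rexp (-(c₀ / 2) * A ^ 2) * rexp (-(c₀ / 2) * B ^ 2)) := by ring

lemma core_bound {G : E3 → ℝ} {C₀ c₀ : ℝ} (hC₀ : 0 ≤ C₀) (hc₀ : 0 < c₀)
    (hbd : ∀ v : E3, |G v| ≤ C₀ * rexp (-c₀ * ‖v‖ ^ 2)) {ω : E3} (hω : ‖ω‖ = 1) (v u : E3) :
    (1 + ‖v‖) * |core G v u ω| ≤ (2 * C₀ ^ 2 * (4 * (1 + 2 / c₀) ^ 2))
      * (rexp (-(c₀ / 2) * ‖v‖ ^ 2) * rexp (-(c₀ / 2) * ‖u‖ ^ 2)) := by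
  have hG2 : ∀ a b : E3, |G a * G b| ≤ C₀ ^ 2 * rexp (-c₀ * (‖a‖ ^ 2 + ‖b‖ ^ 2)) := by
    intro a b
    rw [abs_mul]
    calc |G a| * |G b| ≤ (C₀ * rexp (-c₀ * ‖a‖ ^ 2)) * (C₀ * rexp (-c₀ * ‖b‖ ^ 2)) :=
          mul_le_mul (hbd a) (hbd b) (abs_nonneg _) (by positivity)
      _ = C₀ ^ 2 * (rexp (-c₀ * ‖a‖ ^ 2) * rexp (-c₀ * ‖b‖ ^ 2)) := by ring
      _ = C₀ ^ 2 * rexp (-c₀ * (‖a‖ ^ 2 + ‖b‖ ^ 2)) := by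
          rw [← Real.exp_add]; ring_nf
  have h1 : |(inner ℝ (v - u) ω : ℝ)| ≤ ‖v‖ + ‖u‖ := by
    calc |(inner ℝ (v - u) ω : ℝ)| ≤ ‖v - u‖ * ‖ω‖ := abs_real_inner_le_norm _ _
      _ = ‖v - u‖ := by rw [hω, mul_one]
      _ ≤ ‖v‖ + ‖u‖ := norm_sub_le _ _
  set s : ℝ := (inner ℝ (u - v) ω : ℝ) with hs
  have h2 : |G (u - s • ω) * G (v + s • ω) - G u * G v|
      ≤ 2 * C₀ ^ 2 * rexp (-c₀ * (‖u‖ ^ 2 + ‖v‖ ^ 2)) := by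
    have he := energy hω u v
    calc |G (u - s • ω) * G (v + s • ω) - G u * G v|
        ≤ |G (u - s • ω) * G (v + s • ω)| + |G u * G v| := abs_sub _ _
      _ ≤ C₀ ^ 2 * rexp (-c₀ * (‖u - s • ω‖ ^ 2 + ‖v + s • ω‖ ^ 2))
          + C₀ ^ 2 * rexp (-c₀ * (‖u‖ ^ 2 + ‖v‖ ^ 2)) := add_le_add (hG2 _ _) (hG2 _ _)
      _ = 2 * C₀ ^ 2 * rexp (-c₀ * (‖u‖ ^ 2 + ‖v‖ ^ 2)) := by
          rw [he]; ring
  have hcore : |core G v u ω| ≤ (‖v‖ + ‖u‖) * (2 * C₀ ^ 2 * rexp (-c₀ * (‖u‖ ^ 2 + ‖v‖ ^ 2))) := by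
    rw [core, abs_mul, abs_abs]
    exact mul_le_mul h1 h2 (abs_nonneg _) (by positivity)
  calc (1 + ‖v‖) * |core G v u ω|
      ≤ (1 + ‖v‖) * ((‖v‖ + ‖u‖) * (2 * C₀ ^ 2 * rexp (-c₀ * (‖u‖ ^ 2 + ‖v‖ ^ 2)))) := by
        apply mul_le_mul_of_nonneg_left hcore (by positivity)
    _ ≤ _ := scalar_bound hC₀ hc₀ (norm_nonneg v) (norm_nonneg u)

/-! ### almost-everywhere membership in the sphere -/

lemma ae_mem_sphere_prod (μ : Measure E3) [SFinite μ] :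
    ∀ᵐ q ∂(μ.prod ν₀), q.2 ∈ Metric.sphere (0 : E3) 1 := by
  rw [ae_iff]
  have heq : {q : E3 × E3 | ¬ q.2 ∈ Metric.sphere (0 : E3) 1}
      = (univ : Set E3) ×ˢ (Metric.sphere (0 : E3) 1)ᶜ := by
    ext q; simp
  rw [heq, Measure.prod_prod]
  have h0 : ν₀ (Metric.sphere (0 : E3) 1)ᶜ = 0 := by
    rw [ν₀, Measure.restrict_apply (Metric.isClosed_sphere.measurableSet.compl)]
    simp
  rw [h0, mul_zero]

lemma ae_mem_sphere_pi :
    ∀ᵐ p ∂πm, p.2.2 ∈ Metric.sphere (0 : E3) 1 := by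
  rw [ae_iff]
  have heq : {p : E3 × E3 × E3 | ¬ p.2.2 ∈ Metric.sphere (0 : E3) 1}
      = (univ : Set E3) ×ˢ ((univ : Set E3) ×ˢ (Metric.sphere (0 : E3) 1)ᶜ) := by
    ext p; simp
  rw [πm, heq, Measure.prod_prod, Measure.prod_prod]
  have h0 : ν₀ (Metric.sphere (0 : E3) 1)ᶜ = 0 := by
    rw [ν₀, Measure.restrict_apply (Metric.isClosed_sphere.measurableSet.compl)]
    simp
  rw [h0, mul_zero, mul_zero]

end CollAux

open CollAux

/-- Collision invariance (momentum): for measurable `G` with Gaussian decay and each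
coordinate `i`, `v ↦ vᵢ Q(G,G)(v)` is integrable and `∫ vᵢ Q(G,G)(v) dv = 0`. -/
theorem collision_invariant_momentum (G : E3 → ℝ) (hG : Measurable G)
    (C₀ c₀ : ℝ) (hC₀ : 0 ≤ C₀) (hc₀ : 0 < c₀)
    (hbd : ∀ v : E3, |G v| ≤ C₀ * Real.exp (-c₀ * ‖v‖ ^ 2)) :
    ∀ i : Fin 3,
      Integrable (fun v : E3 => v i * collQ G G v) ∧
        (∫ v : E3, v i * collQ G G v) = 0 := by
  intro i
  set Kc : ℝ := 2 * C₀ ^ 2 * (4 * (1 + 2 / c₀) ^ 2) with hKcdef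
  set m : E3 → ℝ := fun w => rexp (-(c₀ / 2) * ‖w‖ ^ 2) with hmdef
  have hm_int : Integrable m := integrable_gauss (by positivity)
  have hbound : ∀ v u ω : E3, ω ∈ Metric.sphere (0 : E3) 1 →
      (1 + ‖v‖) * |core G v u ω| ≤ Kc * (m v * m u) := by
    intro v u ω hω
    have hω1 : ‖ω‖ = 1 := by simpa using hω
    exact core_bound hC₀ hc₀ hbd hω1 v u
  have hcm := core_measurable (G := G) hG
  set F : E3 × E3 × E3 → ℝ := fun p => p.1 i * core G p.1 p.2.1 p.2.2 with hFdef
  have hmaj1 : Integrable (fun q : E3 × E3 => m q.1 * 1) ((volume : Measure E3).prod ν₀) :=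
    hm_int.mul_prod (integrable_const 1)
  have haes : AEStronglyMeasurable F πm :=
    (Measurable.mul (f := fun p : E3 × E3 × E3 => p.1 i) (by fun_prop) hcm).aestronglyMeasurable
  have hFint : Integrable F πm := by
    refine Integrable.mono' ((hm_int.mul_prod hmaj1).const_mul Kc) haes ?_
    filter_upwards [ae_mem_sphere_pi] with p hp
    have h := hbound p.1 p.2.1 p.2.2 hp
    have h2 : |F p| ≤ (1 + ‖p.1‖) * |core G p.1 p.2.1 p.2.2| := by
      rw [hFdef, abs_mul]
      apply mul_le_mul_of_nonneg_right _ (abs_nonneg _)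
      calc |p.1 i| ≤ ‖p.1‖ := coord_le_norm _ _
        _ ≤ 1 + ‖p.1‖ := by linarith [norm_nonneg p.1]
    rw [Real.norm_eq_abs]
    calc |F p| ≤ (1 + ‖p.1‖) * |core G p.1 p.2.1 p.2.2| := h2
      _ ≤ Kc * (m p.1 * m p.2.1) := h
      _ = Kc * (m p.1 * (m p.2.1 * 1)) := by ring
  have hvint : ∀ v : E3, Integrable (fun q : E3 × E3 => core G v q.1 q.2)
      ((volume : Measure E3).prod ν₀) := by
    intro v
    refine Integrable.mono' (hmaj1.const_mul (Kc * m v))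
      ((hcm.comp ((measurable_const (a := v)).prodMk measurable_id)).aestronglyMeasurable) ?_
    filter_upwards [ae_mem_sphere_prod volume] with q hq
    have h := hbound v q.1 q.2 hq
    rw [Real.norm_eq_abs]
    have h1le : |core G v q.1 q.2| ≤ (1 + ‖v‖) * |core G v q.1 q.2| := by
      nlinarith [abs_nonneg (core G v q.1 q.2), norm_nonneg v]
    calc |core G v q.1 q.2| ≤ (1 + ‖v‖) * |core G v q.1 q.2| := h1le
      _ ≤ Kc * (m v * m q.1) := h
      _ = (Kc * m v) * (m q.1 * 1) := by ring
  have hQ : ∀ v : E3, collQ G G v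
      = ∫ q, core G v q.1 q.2 ∂((volume : Measure E3).prod ν₀) := by
    intro v
    exact integral_integral (f := fun u ω => core G v u ω) (hvint v)
  have heqfun : (fun v : E3 => v i * collQ G G v)
      = fun v => ∫ q, F (v, q) ∂((volume : Measure E3).prod ν₀) := by
    funext v
    rw [hQ v, ← integral_const_mul]
  constructor
  · rw [heqfun]; exact hFint.integral_prod_left
  · rw [heqfun]
    have hTT : (∫ v : E3, ∫ q, F (v, q) ∂((volume : Measure E3).prod ν₀))
        = ∫ p, F p ∂πm := integral_integral (f := fun v q => F (v, q)) hFint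
    rw [hTT]
    -- step A: swap `u` and `v`
    have hcompA : ∫ p, F (eA p) ∂πm = ∫ p, F p ∂πm :=
      eA_measurePreserving.integral_comp eA.measurableEmbedding F
    have hAeq : ∀ p : E3 × E3 × E3, F (eA p) = p.2.1 i * core G p.1 p.2.1 p.2.2 := by
      intro p
      show p.2.1 i * core G p.2.1 p.1 p.2.2 = _
      rw [core_symm]
    have hGint : Integrable (fun p : E3 × E3 × E3 => p.2.1 i * core G p.1 p.2.1 p.2.2) πm := by
      have h := (eA_measurePreserving.integrable_comp_emb eA.measurableEmbedding).2 hFint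
      have h2 : (F ∘ ⇑eA) = fun p : E3 × E3 × E3 => p.2.1 i * core G p.1 p.2.1 p.2.2 :=
        funext hAeq
      rwa [h2] at h
    have hA : ∫ p, p.2.1 i * core G p.1 p.2.1 p.2.2 ∂πm = ∫ p, F p ∂πm := by
      rw [← hcompA]
      exact integral_congr_ae (Filter.Eventually.of_forall fun p => (hAeq p).symm)
    set F₂ : E3 × E3 × E3 → ℝ := fun p => (p.1 i + p.2.1 i) * core G p.1 p.2.1 p.2.2 with hF₂def
    have hF2eq : F₂ = fun p => F p + p.2.1 i * core G p.1 p.2.1 p.2.2 := by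
      funext p; rw [hF₂def, hFdef]; ring
    have hF2int : Integrable F₂ πm := by rw [hF2eq]; exact hFint.add hGint
    have hF2val : ∫ p, F₂ p ∂πm = (∫ p, F p ∂πm) + (∫ p, F p ∂πm) := by
      rw [hF2eq, integral_add hFint hGint, hA]
    -- step B: the collision reflection
    have hcompB : ∫ p, F₂ (eB p) ∂πm = ∫ p, F₂ p ∂πm :=
      eB_measurePreserving.integral_comp eB.measurableEmbedding F₂
    have hBneg : ∀ᵐ p ∂πm, F₂ (eB p) = - F₂ p := by
      filter_upwards [ae_mem_sphere_pi] with p hp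
      obtain ⟨v, u, ω⟩ := p
      have hω1 : ‖ω‖ = 1 := by simpa using hp
      have heB : eB (v, u, ω)
          = (v + (inner ℝ (u - v) ω : ℝ) • ω, u - (inner ℝ (u - v) ω : ℝ) • ω, ω) := by
        show cE.symm (Ψequiv (cE (v, u, ω))) = _
        have h1 : cE (v, u, ω) = (ω, v, u) := rfl
        rw [h1]
        have h2 : Ψequiv (ω, v, u) = (ω, Tmap (nvec ω) (v, u)) := rfl
        rw [h2, nvec_eq hp, Tmap_apply]
        rfl
      rw [heB]
      have hsum : ((v + (inner ℝ (u - v) ω : ℝ) • ω) i + (u - (inner ℝ (u - v) ω : ℝ) • ω) i)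
          = v i + u i := by
        simp only [PiLp.add_apply, PiLp.sub_apply, PiLp.smul_apply, smul_eq_mul]
        ring
      simp only [hF₂def]
      rw [hsum, core_reflect hω1]
      ring
    have h0 : ∫ p, F₂ p ∂πm = 0 := by
      have h := hcompB
      rw [integral_congr_ae hBneg, integral_neg] at h
      linarith
    linarith [hF2val, h0]
end
end

section
/- Let Ω ⊂ ℝ³ be a nonempty bounded open convex set and let 0 < γ < 1. Then ∫_Ω d(x, ∂Ω)^{−γ} dx < ∞, where d(x,∂Ω) denotes the Euclidean distance from x to the boundary ∂Ω. -/
open MeasureTheory Real Set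
open scoped ENNReal
noncomputable section

lemma homothety_ball_subset {Ω : Set E3} (hconv : Convex ℝ Ω)
    {x₀ : E3} {r : ℝ} (hball : Metric.ball x₀ r ⊆ Ω)
    {l : ℝ} (hl0 : 0 < l) (hl1 : l ≤ 1) {y : E3} (hy : y ∈ Ω) :
    Metric.ball (x₀ + (1 - l) • (y - x₀)) (l * r) ⊆ Ω := by
  intro z hz
  set c := x₀ + (1 - l) • (y - x₀) with hc
  have hzc : dist z c < l * r := Metric.mem_ball.1 hz
  set w := x₀ + l⁻¹ • (z - c) with hw
  have hwball : w ∈ Metric.ball x₀ r := by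
    rw [Metric.mem_ball, dist_eq_norm]
    have h1 : w - x₀ = l⁻¹ • (z - c) := by rw [hw]; abel
    rw [h1, norm_smul, Real.norm_eq_abs, abs_of_pos (inv_pos.2 hl0)]
    rw [dist_eq_norm] at hzc
    calc l⁻¹ * ‖z - c‖ < l⁻¹ * (l * r) := by
          exact mul_lt_mul_of_pos_left hzc (inv_pos.2 hl0)
      _ = r := by field_simp
  have hkey : l • w + (1 - l) • y = z := by
    have h2 : l • (l⁻¹ • (z - c)) = z - c := smul_inv_smul₀ hl0.ne' _
    rw [hw, smul_add, h2, hc]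
    module
  have := hconv (a := l) (b := 1 - l) (hball hwball) hy hl0.le (by linarith) (by ring)
  rwa [hkey] at this

lemma le_infDist_of_homothety {Ω : Set E3} (hopen : IsOpen Ω) (hconv : Convex ℝ Ω)
    (hfr : (frontier Ω).Nonempty)
    {x₀ : E3} {r : ℝ} (hball : Metric.ball x₀ r ⊆ Ω)
    {l : ℝ} (hl0 : 0 < l) (hl1 : l ≤ 1) {y : E3} (hy : y ∈ Ω) :
    l * r ≤ Metric.infDist (x₀ + (1 - l) • (y - x₀)) (frontier Ω) := by
  by_contra h
  push_neg at h
  obtain ⟨p, hp, hdp⟩ := (Metric.infDist_lt_iff hfr).1 h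
  have hpΩ : p ∈ Ω := homothety_ball_subset hconv hball hl0 hl1 hy
    (Metric.mem_ball'.2 hdp)
  rw [hopen.frontier_eq] at hp
  exact hp.2 hpΩ




lemma meas_dist_lt_le {Ω : Set E3} (hopen : IsOpen Ω) (hconv : Convex ℝ Ω)
    (hbdd : Bornology.IsBounded Ω) (hfr : (frontier Ω).Nonempty)
    {x₀ : E3} {r : ℝ} (hr : 0 < r) (hball : Metric.ball x₀ r ⊆ Ω)
    {t : ℝ} (ht0 : 0 < t) (htr : t ≤ r) :
    volume {x ∈ Ω | Metric.infDist x (frontier Ω) < t}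
      ≤ ENNReal.ofReal (3 * (t / r)) * volume Ω := by
  set l := t / r with hl
  have hl0 : 0 < l := div_pos ht0 hr
  have hl1 : l ≤ 1 := (div_le_one hr).2 htr
  have hlr : l * r = t := div_mul_cancel₀ t hr.ne'
  rcases eq_or_lt_of_le hl1 with heq | hlt
  · have h1 : (1 : ℝ≥0∞) ≤ ENNReal.ofReal (3 * l) := by
      rw [heq]; exact ENNReal.one_le_ofReal.2 (by norm_num)
    calc volume {x ∈ Ω | Metric.infDist x (frontier Ω) < t} ≤ volume Ω :=
          measure_mono (sep_subset _ _)
      _ = 1 * volume Ω := (one_mul _).symm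
      _ ≤ ENNReal.ofReal (3 * l) * volume Ω := mul_le_mul_left h1 _
  · set m := 1 - l with hm
    have hm0 : 0 < m := by simp [hm]; linarith
    set Ω' := AffineMap.homothety x₀ m '' Ω with hΩ'
    have hΩ'open : IsOpen Ω' := AffineMap.homothety_isOpenMap x₀ m hm0.ne' Ω hopen
    have hsub : Ω' ⊆ {x ∈ Ω | t ≤ Metric.infDist x (frontier Ω)} := by
      rintro _ ⟨y, hy, rfl⟩
      have happ : AffineMap.homothety x₀ m y = x₀ + (1 - l) • (y - x₀) := by
        rw [AffineMap.homothety_apply]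
        simp only [vsub_eq_sub, vadd_eq_add, hm]
        abel
      rw [happ]
      refine ⟨homothety_ball_subset hconv hball hl0 hl1 hy
        (Metric.mem_ball_self (by positivity)), ?_⟩
      rw [← hlr]
      exact le_infDist_of_homothety hopen hconv hfr hball hl0 hl1 hy
    have hsubΩ : Ω' ⊆ Ω := fun x hx => (hsub hx).1
    have hmeasΩ' : volume Ω' = ENNReal.ofReal (m ^ 3) * volume Ω := by
      rw [hΩ', Measure.addHaar_image_homothety]
      congr 2
      rw [finrank_euclideanSpace_fin, abs_of_pos (by positivity)]
    have hΩfin : volume Ω < ⊤ := hbdd.measure_lt_top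
    have hΩ'fin : volume Ω' ≠ ⊤ := by
      rw [hmeasΩ']
      exact (ENNReal.mul_lt_top ENNReal.ofReal_lt_top hΩfin).ne
    have hdiff : {x ∈ Ω | Metric.infDist x (frontier Ω) < t} ⊆ Ω \ Ω' := by
      rintro x ⟨hxΩ, hxd⟩
      exact ⟨hxΩ, fun hx' => absurd (hsub hx').2 (not_le.2 hxd)⟩
    calc volume {x ∈ Ω | Metric.infDist x (frontier Ω) < t}
        ≤ volume (Ω \ Ω') := measure_mono hdiff
      _ = volume Ω - volume Ω' :=
          measure_diff hsubΩ hΩ'open.measurableSet.nullMeasurableSet hΩ'fin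
      _ ≤ ENNReal.ofReal (3 * l) * volume Ω := by
          rw [hmeasΩ', tsub_le_iff_right, ← add_mul, ← ENNReal.ofReal_add (by positivity)
            (by positivity)]
          have h1 : (1 : ℝ) ≤ 3 * l + m ^ 3 := by
            rw [hm]; nlinarith [mul_nonneg (mul_nonneg hl0.le hl0.le) (by linarith : (0:ℝ) ≤ 3 - l)]
          calc volume Ω = 1 * volume Ω := (one_mul _).symm
            _ ≤ ENNReal.ofReal (3 * l + m ^ 3) * volume Ω :=
                mul_le_mul_left (ENNReal.one_le_ofReal.2 h1) _

/-- For a nonempty bounded open convex `Ω ⊂ ℝ³` and `0 < γ < 1`, the negative power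
of the distance to the boundary, `x ↦ d(x,∂Ω)^{-γ}`, is integrable over `Ω`. -/


theorem integrable_neg_pow_dist_boundary (Ω : Set E3) (hne : Ω.Nonempty)
    (hopen : IsOpen Ω) (hconv : Convex ℝ Ω) (hbdd : Bornology.IsBounded Ω)
    (γ : ℝ) (hγ0 : 0 < γ) (hγ1 : γ < 1) :
    IntegrableOn (fun x : E3 => Metric.infDist x (frontier Ω) ^ (-γ)) Ω := by
  obtain ⟨x₀, hx₀⟩ := hne
  obtain ⟨r, hr, hball⟩ := Metric.isOpen_iff.1 hopen x₀ hx₀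
  set d : E3 → ℝ := fun x => Metric.infDist x (frontier Ω) with hd
  have hΩne_univ : Ω ≠ univ := fun h =>
    NormedSpace.unbounded_univ ℝ E3 (h ▸ hbdd)
  have hfr : (frontier Ω).Nonempty := nonempty_frontier_iff.2 ⟨⟨x₀, hx₀⟩, hΩne_univ⟩
  have hdcont : Continuous d := Metric.continuous_infDist_pt _
  have hdpos : ∀ x ∈ Ω, 0 < d x := by
    intro x hx
    have h1 : Ωᶜ.Nonempty := nonempty_compl.2 hΩne_univ
    have h2 : 0 < Metric.infDist x Ωᶜ :=
      (hopen.isClosed_compl.notMem_iff_infDist_pos h1).1 (by simp [hx])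
    have h3 : frontier Ω ⊆ Ωᶜ := by
      rw [hopen.frontier_eq]; exact fun p hp => hp.2
    exact h2.trans_le (Metric.infDist_le_infDist_of_subset h3 hfr)
  have haesm : AEStronglyMeasurable (fun x => d x ^ (-γ)) (volume.restrict Ω) :=
    (hdcont.continuousOn.rpow_const fun x hx => Or.inl (hdpos x hx).ne').aestronglyMeasurable
      hopen.measurableSet
  refine ⟨haesm, ?_⟩
  rw [hasFiniteIntegral_iff_ofReal (Filter.Eventually.of_forall fun x =>
    Real.rpow_nonneg Metric.infDist_nonneg _)]
  have hΩfin : volume Ω < ⊤ := hbdd.measure_lt_top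
  -- the dyadic pieces
  set T : ℕ → Set E3 := fun n =>
    match n with
    | 0 => {x ∈ Ω | r ≤ d x}
    | n + 1 => {x ∈ Ω | r * (2⁻¹ : ℝ) ^ (n + 1) ≤ d x ∧ d x < r * (2⁻¹ : ℝ) ^ n} with hT
  have hcover : Ω ⊆ ⋃ n, T n := by
    intro x hx
    rcases le_or_gt r (d x) with h | h
    · exact mem_iUnion.2 ⟨0, hx, h⟩
    · have hex : ∃ n : ℕ, r * (2⁻¹ : ℝ) ^ n ≤ d x := by
        obtain ⟨n, hn⟩ := exists_pow_lt_of_lt_one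
          (div_pos (hdpos x hx) hr) (by norm_num : (2⁻¹ : ℝ) < 1)
        exact ⟨n, by rw [mul_comm]; exact (le_div_iff₀ hr).1 hn.le⟩
      have h0 : Nat.find hex ≠ 0 := by
        intro h0
        have := Nat.find_spec hex
        rw [h0] at this
        simp at this
        linarith
      obtain ⟨k, hk⟩ := Nat.exists_eq_succ_of_ne_zero h0
      refine mem_iUnion.2 ⟨k + 1, hx, ?_, ?_⟩
      · have := Nat.find_spec hex
        rwa [hk] at this
      · have := Nat.find_min hex (m := k) (by omega)
        exact not_le.1 this
  have hTmeas : ∀ n, MeasurableSet (T n) := by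
    intro n
    match n with
    | 0 =>
      exact hopen.measurableSet.inter (measurableSet_le measurable_const hdcont.measurable)
    | n + 1 =>
      exact hopen.measurableSet.inter
        ((measurableSet_le measurable_const hdcont.measurable).inter
          (measurableSet_lt hdcont.measurable measurable_const))
  -- coefficients
  set K : ℕ → ℝ≥0∞ := fun n =>
    match n with
    | 0 => ENNReal.ofReal (r ^ (-γ)) * volume Ω
    | n + 1 => ENNReal.ofReal ((r * (2⁻¹ : ℝ) ^ (n + 1)) ^ (-γ) * (3 * (2⁻¹ : ℝ) ^ n)) *
        volume Ω with hK
  have hbound : ∀ n, ∫⁻ x in T n, ENNReal.ofReal (d x ^ (-γ)) ≤ K n := by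
    intro n
    match n with
    | 0 =>
      calc ∫⁻ x in T 0, ENNReal.ofReal (d x ^ (-γ))
          ≤ ∫⁻ _x in T 0, ENNReal.ofReal (r ^ (-γ)) := by
            refine setLIntegral_mono' (hTmeas 0) fun x hx => ?_
            exact ENNReal.ofReal_le_ofReal
              (Real.rpow_le_rpow_of_nonpos hr hx.2 (by linarith))
        _ = ENNReal.ofReal (r ^ (-γ)) * volume (T 0) := setLIntegral_const _ _
        _ ≤ K 0 := mul_le_mul_right (measure_mono (sep_subset _ _)) _
    | n + 1 =>
      have ht0 : (0:ℝ) < r * (2⁻¹ : ℝ) ^ (n + 1) := by positivity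
      calc ∫⁻ x in T (n+1), ENNReal.ofReal (d x ^ (-γ))
          ≤ ∫⁻ _x in T (n+1), ENNReal.ofReal ((r * (2⁻¹ : ℝ) ^ (n + 1)) ^ (-γ)) := by
            refine setLIntegral_mono' (hTmeas (n+1)) fun x hx => ?_
            exact ENNReal.ofReal_le_ofReal
              (Real.rpow_le_rpow_of_nonpos ht0 hx.2.1 (by linarith))
        _ = ENNReal.ofReal ((r * (2⁻¹ : ℝ) ^ (n + 1)) ^ (-γ)) * volume (T (n+1)) :=
            setLIntegral_const _ _
        _ ≤ ENNReal.ofReal ((r * (2⁻¹ : ℝ) ^ (n + 1)) ^ (-γ)) *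
              (ENNReal.ofReal (3 * (2⁻¹ : ℝ) ^ n) * volume Ω) := by
            refine mul_le_mul_right ?_ _
            have hTsub : T (n+1) ⊆ {x ∈ Ω | d x < r * (2⁻¹ : ℝ) ^ n} :=
              fun x hx => ⟨hx.1, hx.2.2⟩
            have htn0 : (0:ℝ) < r * (2⁻¹ : ℝ) ^ n := by positivity
            have htnr : r * (2⁻¹ : ℝ) ^ n ≤ r := by
              nlinarith [pow_le_one₀ (by norm_num : (0:ℝ) ≤ 2⁻¹) (by norm_num : (2⁻¹:ℝ) ≤ 1) (n := n)]
            have := meas_dist_lt_le hopen hconv hbdd hfr hr hball htn0 htnr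
            have heq : 3 * (r * (2⁻¹ : ℝ) ^ n / r) = 3 * (2⁻¹ : ℝ) ^ n := by
              field_simp
            calc volume (T (n+1)) ≤ volume {x ∈ Ω | d x < r * (2⁻¹ : ℝ) ^ n} :=
                  measure_mono hTsub
              _ ≤ ENNReal.ofReal (3 * (2⁻¹ : ℝ) ^ n) * volume Ω := by rw [← heq]; exact this
        _ = K (n+1) := by
            rw [hK, ← mul_assoc, ← ENNReal.ofReal_mul (Real.rpow_nonneg ht0.le _)]
  -- summability of the coefficients
  have hpow : ∀ n : ℕ, ((2⁻¹:ℝ)^n)^(-γ) = ((2:ℝ)^γ)^n := by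
    intro n
    rw [inv_pow, Real.inv_rpow (by positivity), ← Real.rpow_neg (by positivity), neg_neg,
      ← Real.rpow_natCast 2 n, ← Real.rpow_natCast ((2:ℝ)^γ) n,
      ← Real.rpow_mul (by norm_num), ← Real.rpow_mul (by norm_num), mul_comm]
  set q : ℝ≥0∞ := ENNReal.ofReal ((2:ℝ) ^ (γ - 1)) with hq
  have hq1 : q < 1 := by
    rw [hq, ← ENNReal.ofReal_one]
    exact ENNReal.ofReal_lt_ofReal_iff_of_nonneg (by positivity) |>.2
      (Real.rpow_lt_one_of_one_lt_of_neg one_lt_two (by linarith))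
  have hKle : ∀ n : ℕ, K (n+1) ≤ ENNReal.ofReal (6 * r ^ (-γ)) * q ^ n * volume Ω := by
    intro n
    have hreal : (r * (2⁻¹ : ℝ) ^ (n + 1)) ^ (-γ) * (3 * (2⁻¹ : ℝ) ^ n)
        ≤ 6 * r ^ (-γ) * ((2:ℝ) ^ (γ - 1)) ^ n := by
      have e0 : (r * (2⁻¹ : ℝ) ^ (n + 1)) ^ (-γ)
          = r ^ (-γ) * (((2⁻¹:ℝ) ^ (n+1)) ^ (-γ)) :=
        Real.mul_rpow hr.le (by positivity)
      rw [e0, hpow]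
      have e1 : (2:ℝ)^(γ-1) = 2^γ * 2⁻¹ := by
        rw [Real.rpow_sub two_pos, Real.rpow_one]; ring
      have e2 : ((2:ℝ)^γ)^(n+1) * (3 * (2⁻¹:ℝ)^n)
          = 3 * (2:ℝ)^γ * (((2:ℝ)^(γ-1))^n) := by
        rw [e1, mul_pow, pow_succ]
        ring
      rw [mul_assoc, e2, ← mul_assoc, mul_comm (r ^ (-γ)) _, mul_assoc, mul_assoc]
      have h2γ : (2:ℝ)^γ ≤ 2 := by
        calc (2:ℝ)^γ ≤ (2:ℝ)^(1:ℝ) :=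
              Real.rpow_le_rpow_of_exponent_le one_le_two hγ1.le
          _ = 2 := Real.rpow_one 2
      have hrest : (0:ℝ) ≤ r ^ (-γ) * ((2:ℝ)^(γ-1))^n := by positivity
      nlinarith [hrest]
    calc K (n+1) ≤ ENNReal.ofReal (6 * r ^ (-γ) * ((2:ℝ) ^ (γ - 1)) ^ n) * volume Ω :=
          mul_le_mul_left (ENNReal.ofReal_le_ofReal hreal) _
      _ = ENNReal.ofReal (6 * r ^ (-γ)) * q ^ n * volume Ω := by
          rw [ENNReal.ofReal_mul (by positivity), ENNReal.ofReal_pow (by positivity)]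
  -- put everything together
  have hsum : ∑' n, K n < ⊤ := by
    rw [tsum_eq_zero_add' ENNReal.summable]
    refine ENNReal.add_lt_top.2 ⟨?_, ?_⟩
    · exact ENNReal.mul_lt_top ENNReal.ofReal_lt_top hΩfin
    · calc ∑' n, K (n+1) ≤ ∑' n : ℕ, ENNReal.ofReal (6 * r ^ (-γ)) * q ^ n * volume Ω :=
            ENNReal.tsum_le_tsum hKle
        _ = ENNReal.ofReal (6 * r ^ (-γ)) * (∑' n : ℕ, q ^ n) * volume Ω := by
            rw [ENNReal.tsum_mul_right, ENNReal.tsum_mul_left]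
        _ < ⊤ := by
            refine ENNReal.mul_lt_top (ENNReal.mul_lt_top ENNReal.ofReal_lt_top ?_) hΩfin
            rw [ENNReal.tsum_geometric]
            exact lt_top_iff_ne_top.2 (ENNReal.inv_ne_top.2 (by
              simp only [ne_eq, tsub_eq_zero_iff_le, not_le]
              exact hq1))
  calc ∫⁻ x in Ω, ENNReal.ofReal (d x ^ (-γ))
      ≤ ∫⁻ x in ⋃ n, T n, ENNReal.ofReal (d x ^ (-γ)) := lintegral_mono_set hcover
    _ ≤ ∑' n, ∫⁻ x in T n, ENNReal.ofReal (d x ^ (-γ)) := lintegral_iUnion_le _ _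
    _ ≤ ∑' n, K n := ENNReal.tsum_le_tsum hbound
    _ < ⊤ := hsum
end
end
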